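/- Let X be a finite set of points in ℙ²_k in uniform position, l a positive integer, and X′ ⊆ X a subset with |X′| = C(l+2,2). If some curve of degree l contains X′, then every curve of degree l containing X′ contains all of X. -/

import Mathlib

open MvPolynomial

/-- Evaluation of degree-`l` homogeneous forms on `ℙ²` (given by representatives in `k³`)
at the points of a finite set `X`. -/
noncomputable def evalMapP2 (k : Type) [Field k] (X : Finset (Fin 3 → k)) (l : ℕ) :
    (homogeneousSubmodule (Fin 3) k l) →ₗ[k] (X → k) where
  toFun f x := eval (x : Fin 3 → k) f.1
  map_add' f g := by funext x; simp
  map_smul' c f := by funext x; simp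

/-- The Hilbert function of a finite set of points of `ℙ²` (given by representatives in `k³`):
`H(X, l)` is the rank of the evaluation map `H⁰(𝒪_{ℙ²}(l)) → H⁰(𝒪_X(l)) = k^X`. -/
noncomputable def hilbertFunction (k : Type) [Field k] (X : Finset (Fin 3 → k)) (l : ℕ) : ℕ :=
  Module.finrank k (LinearMap.range (evalMapP2 k X l))

/-- `h⁰(ℙ², I_X(l))`: the dimension of the space of degree-`l` forms vanishing on `X`. -/
noncomputable def h0IdealSheaf (k : Type) [Field k] (X : Finset (Fin 3 → k)) (l : ℕ) : ℕ :=
  Module.finrank k (LinearMap.ker (evalMapP2 k X l))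

/-- `h¹(ℙ², I_X(l)) = deg X - H(X, l)`, from the exact sequence
`0 → H⁰(I_X(l)) → H⁰(𝒪(l)) → H⁰(𝒪_X(l)) → H¹(I_X(l)) → H¹(𝒪(l)) = 0`. -/
noncomputable def h1IdealSheaf (k : Type) [Field k] (X : Finset (Fin 3 → k)) (l : ℕ) : ℕ :=
  X.card - hilbertFunction k X l

/-- The representatives in `X ⊆ k³` give pairwise distinct points of `ℙ²`. -/
def ProjDistinct (k : Type) [Field k] (X : Finset (Fin 3 → k)) : Prop :=
  (∀ x ∈ X, x ≠ 0) ∧ ∀ x ∈ X, ∀ y ∈ X, x ≠ y → ∀ c : k, x ≠ c • y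

/-- `X` has the Uniform Position Property: any two subsets of the same cardinality
have the same Hilbert function. -/
def UniformPosition (k : Type) [Field k] (X : Finset (Fin 3 → k)) : Prop :=
  ∀ Z₁ Z₂ : Finset (Fin 3 → k), Z₁ ⊆ X → Z₂ ⊆ X → Z₁.card = Z₂.card →
    ∀ i, hilbertFunction k Z₁ i = hilbertFunction k Z₂ i


namespace Stmt9Aux
open scoped Classical

variable (k : Type) [Field k]

/-- Index set of pairs of exponents. -/
noncomputable def T (l : ℕ) : Finset (ℕ × ℕ) :=
  (Finset.range (l+1)).biUnion fun n => Finset.HasAntidiagonal.antidiagonal n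

lemma card_T (l : ℕ) : (T l).card = (l + 2).choose 2 := by
  have hdisj : ∀ x ∈ Finset.range (l+1), ∀ y ∈ Finset.range (l+1), x ≠ y →
      Disjoint (Finset.HasAntidiagonal.antidiagonal x) (Finset.HasAntidiagonal.antidiagonal y) := by
    intro x _ y _ hxy
    refine Finset.disjoint_left.2 ?_
    intro p hp hq
    rw [Finset.HasAntidiagonal.mem_antidiagonal] at hp hq
    omega
  have h1 : (T l).card = ∑ n ∈ Finset.range (l+1), (n+1) := by
    rw [T, Finset.card_biUnion hdisj]
    exact Finset.sum_congr rfl fun n _ => Finset.Nat.card_antidiagonal n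
  have h2 : ∑ n ∈ Finset.range (l+2), n = ∑ n ∈ Finset.range (l+1), (n+1) + 0 :=
    Finset.sum_range_succ' _ _
  have h3 : (∑ i ∈ Finset.range (l+2), i) * 2 = (l+2) * (l+2-1) :=
    Finset.sum_range_id_mul_two (l+2)
  have h4 : (l+2).choose 2 = (l+2) * (l+2-1) / 2 := Nat.choose_two_right (l+2)
  omega

/-- Exponent finsupp from a pair. -/
noncomputable def e (l : ℕ) (p : ℕ × ℕ) : Fin 3 →₀ ℕ :=
  Finsupp.equivFunOnFinite.symm ![p.1, p.2, l - p.1 - p.2]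

noncomputable def S (l : ℕ) : Finset (MvPolynomial (Fin 3) k) :=
  (T l).image fun p => monomial (e l p) (1 : k)

set_option linter.unnecessarySeqFocus false in
lemma hVle (l : ℕ) :
    homogeneousSubmodule (Fin 3) k l ≤
      Submodule.span k ((S k l : Set (MvPolynomial (Fin 3) k))) := by
  intro f hf
  rw [← support_sum_monomial_coeff f]
  refine Submodule.sum_mem _ fun d hd => ?_
  have hc : coeff d f ≠ 0 := mem_support_iff.1 hd
  have hw := hf hc
  have hdeg : d 0 + d 1 + d 2 = l := by
    have h1 : ∑ i ∈ d.support, d i = l := by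
      rw [← hw, Finsupp.weight_apply]
      simp [Finsupp.sum]
    have h2 : ∑ i : Fin 3, d i = ∑ i ∈ d.support, d i :=
      (Finset.sum_subset (Finset.subset_univ _) (by
        intro x _ hx
        exact Finsupp.notMem_support_iff.1 hx)).symm
    rw [Fin.sum_univ_three] at h2
    omega
  have hed : e l (d 0, d 1) = d := by
    ext i
    fin_cases i <;> simp [e] <;> omega
  have hmem : monomial d (1 : k) ∈ S k l := by
    refine Finset.mem_image.2 ⟨(d 0, d 1), ?_, by simp only [hed]⟩
    refine Finset.mem_biUnion.2 ⟨d 0 + d 1, Finset.mem_range.2 (by omega), ?_⟩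
    exact Finset.HasAntidiagonal.mem_antidiagonal.2 rfl
  have heq : monomial d (coeff d f) = coeff d f • monomial d (1 : k) := by
    simp [smul_monomial]
  rw [heq]
  exact Submodule.smul_mem _ _ (Submodule.subset_span hmem)

instance fdV (l : ℕ) : FiniteDimensional k (homogeneousSubmodule (Fin 3) k l) :=
  Submodule.finiteDimensional_of_le (hVle k l)

lemma finrank_V_le (l : ℕ) :
    Module.finrank k (homogeneousSubmodule (Fin 3) k l) ≤ (l + 2).choose 2 := by
  calc Module.finrank k (homogeneousSubmodule (Fin 3) k l)
      ≤ Module.finrank k (Submodule.span k ((S k l : Set (MvPolynomial (Fin 3) k)))) :=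
        Submodule.finrank_mono (hVle k l)
    _ ≤ (S k l).card := finrank_span_finset_le_card (S k l)
    _ ≤ (T l).card := Finset.card_image_le
    _ = (l + 2).choose 2 := card_T l

/-- The space of degree-`l` forms vanishing on `Z`, as a submodule of the space of forms. -/
noncomputable def K (Z : Finset (Fin 3 → k)) (l : ℕ) :
    Submodule k (homogeneousSubmodule (Fin 3) k l) :=
  LinearMap.ker (evalMapP2 k Z l)

variable {k}

lemma mem_K {Z : Finset (Fin 3 → k)} {l : ℕ} {f : homogeneousSubmodule (Fin 3) k l} :
    f ∈ K k Z l ↔ ∀ x ∈ Z, eval x (f : MvPolynomial (Fin 3) k) = 0 := by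
  rw [K, LinearMap.mem_ker, funext_iff]
  constructor
  · intro h x hx
    exact h ⟨x, hx⟩
  · intro h x
    exact h x.1 x.2

lemma K_mono {Z Z' : Finset (Fin 3 → k)} (h : Z' ⊆ Z) (l : ℕ) : K k Z l ≤ K k Z' l :=
  fun f hf => mem_K.2 fun x hx => mem_K.1 hf x (h hx)

/-- Evaluation at a point as a linear functional on forms. -/
noncomputable def evalPt (x : Fin 3 → k) (l : ℕ) :
    (homogeneousSubmodule (Fin 3) k l) →ₗ[k] k where
  toFun f := eval x f.1
  map_add' f g := by simp
  map_smul' c f := by simp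

set_option maxHeartbeats 1000000 in
set_option synthInstance.maxHeartbeats 1000000 in
lemma finrank_K_erase_le {Z : Finset (Fin 3 → k)} {p : Fin 3 → k} (hp : p ∈ Z) (l : ℕ) :
    Module.finrank k (K k (Z.erase p) l) ≤ Module.finrank k (K k Z l) + 1 := by
  by_cases hle : K k (Z.erase p) l ≤ K k Z l
  · have := Submodule.finrank_mono hle
    omega
  · obtain ⟨g, hg, hgZ⟩ := SetLike.not_le_iff_exists.1 hle
    have hgp : evalPt p l g ≠ 0 := by
      intro h0
      refine hgZ (mem_K.2 fun x hx => ?_)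
      rcases eq_or_ne x p with rfl | hxp
      · exact h0
      · exact mem_K.1 hg x (Finset.mem_erase.2 ⟨hxp, hx⟩)
    have hgne : g ≠ 0 := fun h => hgZ (h ▸ Submodule.zero_mem _)
    have hge : K k (Z.erase p) l ≤ K k Z l ⊔ Submodule.span k {g} := by
      intro f hf
      set c := evalPt p l f / evalPt p l g with hc
      have key : f - c • g ∈ K k Z l := by
        refine mem_K.2 fun x hx => ?_
        have hx' : eval x ((f - c • g : homogeneousSubmodule (Fin 3) k l) :
            MvPolynomial (Fin 3) k) = evalPt x l f - c * evalPt x l g := by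
          show evalPt x l (f - c • g) = _
          rw [map_sub, map_smul, smul_eq_mul]
        rcases eq_or_ne x p with rfl | hxp
        · rw [hx', hc, div_mul_cancel₀ _ hgp, sub_self]
        · have h1 : evalPt x l f = 0 := mem_K.1 hf x (Finset.mem_erase.2 ⟨hxp, hx⟩)
          have h2 : evalPt x l g = 0 := mem_K.1 hg x (Finset.mem_erase.2 ⟨hxp, hx⟩)
          rw [hx', h1, h2, mul_zero, sub_self]
      have hfeq : f = (f - c • g) + c • g := by abel
      rw [hfeq]
      exact Submodule.add_mem _ (Submodule.mem_sup_left key)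
        (Submodule.mem_sup_right (Submodule.smul_mem _ _ (Submodule.subset_span rfl)))
    have hfin := Submodule.finrank_mono hge
    have hsup := Submodule.finrank_add_le_finrank_add_finrank (K k Z l) (Submodule.span k {g})
    have hspan : Module.finrank k (Submodule.span k {g}) = 1 := finrank_span_singleton hgne
    omega

lemma rank_nullity (Z : Finset (Fin 3 → k)) (l : ℕ) :
    hilbertFunction k Z l + Module.finrank k (K k Z l)
      = Module.finrank k (homogeneousSubmodule (Fin 3) k l) :=
  LinearMap.finrank_range_add_finrank_ker (evalMapP2 k Z l)

end Stmt9Aux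

open Stmt9Aux in
open MvPolynomial in
/-- If `X ⊆ ℙ²` is in uniform position, `l > 0`, `X' ⊆ X` has cardinality `C(l+2,2)`, and some
curve of degree `l` contains `X'`, then every curve of degree `l` containing `X'` contains `X`. -/
theorem stmt9 (k : Type) [Field k] [IsAlgClosed k] (X X' : Finset (Fin 3 → k))
    (hdist : ProjDistinct k X) (hupp : UniformPosition k X)
    (hsub : X' ⊆ X) (l : ℕ) (hl : 0 < l) (hcard : X'.card = (l + 2).choose 2)
    (hexists : ∃ f ∈ homogeneousSubmodule (Fin 3) k l, f ≠ 0 ∧ ∀ x ∈ X', eval x f = 0) :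
    ∀ f ∈ homogeneousSubmodule (Fin 3) k l, f ≠ 0 →
      (∀ x ∈ X', eval x f = 0) → ∀ x ∈ X, eval x f = 0 := by
  classical
  intro f hf hfne hfvan
  set N := (l + 2).choose 2 with hN
  obtain ⟨f₀, hf₀mem, hf₀ne, hf₀van⟩ := hexists
  -- the kernel on X' is nonzero
  have hKX'pos : 0 < Module.finrank k (K k X' l) := by
    rw [Module.finrank_pos_iff_exists_ne_zero (R := k) (M := K k X' l)]
    refine ⟨⟨⟨f₀, hf₀mem⟩, mem_K.2 hf₀van⟩, ?_⟩
    intro hzero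
    apply hf₀ne
    have := (Submodule.mk_eq_zero _ _).1 hzero
    exact (Submodule.mk_eq_zero _ _).1 this
  have hD : Module.finrank k (homogeneousSubmodule (Fin 3) k l) ≤ N := finrank_V_le k l
  -- find a "flat step" inside X'
  have hflat : ∃ Z ⊆ X', ∃ p ∈ Z,
      Module.finrank k (K k Z l) = Module.finrank k (K k (Z.erase p) l) := by
    by_contra hcon
    push_neg at hcon
    have haux : ∀ n (Z : Finset (Fin 3 → k)), Z.card = n → Z ⊆ X' →
        Module.finrank k (K k Z l) + Z.card ≤ Module.finrank k (homogeneousSubmodule (Fin 3) k l) := by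
      intro n
      induction n with
      | zero =>
        intro Z hZ _
        have := Submodule.finrank_le (K k Z l)
        omega
      | succ n ih =>
        intro Z hZcard hZsub
        obtain ⟨p, hp⟩ : Z.Nonempty := Finset.card_pos.1 (by omega)
        have h1 := finrank_K_erase_le hp l
        have h2 := hcon Z hZsub p hp
        have hle : Module.finrank k (K k Z l) ≤ Module.finrank k (K k (Z.erase p) l) :=
          Submodule.finrank_mono (K_mono (Finset.erase_subset p Z) l)
        have ih' := ih (Z.erase p) (by rw [Finset.card_erase_of_mem hp]; omega)
          ((Finset.erase_subset p Z).trans hZsub)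
        rw [Finset.card_erase_of_mem hp] at ih'
        omega
    have h := haux X'.card X' rfl (subset_refl _)
    rw [hcard] at h
    omega
  obtain ⟨Z₀, hZ₀sub, p₀, hp₀, heq⟩ := hflat
  set m := (Z₀.erase p₀).card with hm
  have hZ₀card : Z₀.card = m + 1 := by
    rw [hm, Finset.card_erase_of_mem hp₀]
    have := Finset.card_pos.2 ⟨p₀, hp₀⟩
    omega
  have hmN : m + 1 ≤ X'.card := hZ₀card ▸ Finset.card_le_card hZ₀sub
  -- flatness propagates upward
  have hQ : ∀ j (W : Finset (Fin 3 → k)), W ⊆ X → W.card = m + 1 + j →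
      ∀ p ∈ W, K k (W.erase p) l ≤ K k W l := by
    intro j
    induction j with
    | zero =>
      intro W hWsub hWcard p hp
      have e1 : hilbertFunction k W l = hilbertFunction k Z₀ l :=
        hupp W Z₀ hWsub (hZ₀sub.trans hsub) (by omega) l
      have e2 : hilbertFunction k (W.erase p) l = hilbertFunction k (Z₀.erase p₀) l :=
        hupp _ _ ((Finset.erase_subset p W).trans hWsub)
          (((Finset.erase_subset p₀ Z₀).trans hZ₀sub).trans hsub)
          (by rw [Finset.card_erase_of_mem hp]; omega) l
      have r1 := rank_nullity (k := k) W l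
      have r2 := rank_nullity (k := k) Z₀ l
      have r3 := rank_nullity (k := k) (W.erase p) l
      have r4 := rank_nullity (k := k) (Z₀.erase p₀) l
      have hfr : Module.finrank k (K k W l) = Module.finrank k (K k (W.erase p) l) := by
        omega
      exact le_of_eq
        (Submodule.eq_of_le_of_finrank_eq (K_mono (Finset.erase_subset p W) l) hfr).symm
    | succ j ihj =>
      intro W hWsub hWcard p hp
      intro g hg
      have hne : (W.erase p).Nonempty := by
        rw [← Finset.card_pos, Finset.card_erase_of_mem hp]
        omega
      obtain ⟨q, hq⟩ := hne
      have hqW : q ∈ W := Finset.mem_of_mem_erase hq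
      have hqp : q ≠ p := Finset.ne_of_mem_erase hq
      have hpW' : p ∈ W.erase q := Finset.mem_erase.2 ⟨fun h => hqp h.symm, hp⟩
      have hsub2 : (W.erase q).erase p ⊆ W.erase p := by
        rw [Finset.erase_right_comm]
        exact Finset.erase_subset q (W.erase p)
      have hg2 : g ∈ K k ((W.erase q).erase p) l := K_mono hsub2 l hg
      have hg3 : g ∈ K k (W.erase q) l :=
        ihj (W.erase q) ((Finset.erase_subset q W).trans hWsub)
          (by rw [Finset.card_erase_of_mem hqW]; omega) p hpW' hg2
      refine mem_K.2 fun x hx => ?_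
      rcases eq_or_ne x p with rfl | hxp
      · exact mem_K.1 hg3 x hpW'
      · exact mem_K.1 hg x (Finset.mem_erase.2 ⟨hxp, hx⟩)
  -- kernels do not change when adding points of X
  have habs : ∀ n (Z : Finset (Fin 3 → k)), X' ⊆ Z → Z ⊆ X → Z.card = X'.card + n →
      K k Z l = K k X' l := by
    intro n
    induction n with
    | zero =>
      intro Z h1 h2 h3
      rw [Finset.eq_of_subset_of_card_le h1 (by omega)]
    | succ n ih =>
      intro Z h1 h2 h3
      have hss : X' ⊂ Z := by
        refine ⟨h1, fun h => ?_⟩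
        have := Finset.card_le_card h
        omega
      obtain ⟨p, hpZ, hpX'⟩ := Finset.exists_of_ssubset hss
      have hKe : K k (Z.erase p) l ≤ K k Z l :=
        hQ (Z.card - (m + 1)) Z h2 (by omega) p hpZ
      have hKe' : K k Z l = K k (Z.erase p) l :=
        le_antisymm (K_mono (Finset.erase_subset p Z) l) hKe
      rw [hKe']
      exact ih (Z.erase p)
        (fun x hx => Finset.mem_erase.2 ⟨fun h => hpX' (h ▸ hx), h1 hx⟩)
        ((Finset.erase_subset p Z).trans h2)
        (by rw [Finset.card_erase_of_mem hpZ]; omega)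
  have hXcard : X'.card ≤ X.card := Finset.card_le_card hsub
  have hKX : K k X l = K k X' l :=
    habs (X.card - X'.card) X hsub (subset_refl X) (by omega)
  have hfK : (⟨f, hf⟩ : homogeneousSubmodule (Fin 3) k l) ∈ K k X' l := mem_K.2 hfvan
  rw [← hKX] at hfK
  exact fun x hx => mem_K.1 hfK x hx
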